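/- Let m ≥ 1 and let X = ℝ^m with its usual topology, and endow the space C(X) of continuous self-maps of X with the compact-open topology. Then every non-empty open subset of C(X) contains a continuous map f : X → X such that for every n ≥ 2 there is no map g : X → X (not even a discontinuous one) with gⁿ = f. -/

import Mathlib

open Function Set

namespace IterRootsAux

/-! ### clamp to [0,1] -/

noncomputable def cl (a : ℝ) : ℝ := max 0 (min 1 a)

lemma cl_nonneg (a : ℝ) : 0 ≤ cl a := le_max_left _ _

lemma cl_le_one (a : ℝ) : cl a ≤ 1 := max_le (by norm_num) (min_le_left _ _)

lemma cl_of_nonpos {a : ℝ} (h : a ≤ 0) : cl a = 0 :=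
  max_eq_left ((min_le_right _ _).trans h)

lemma cl_of_one_le {a : ℝ} (h : 1 ≤ a) : cl a = 1 := by
  rw [cl, min_eq_left h]
  norm_num

lemma continuous_cl : Continuous cl :=
  continuous_const.max (continuous_const.min continuous_id)

/-- The combinatorial no-iterative-roots lemma. -/
theorem no_root {X : Type*} (f : X → X) (p x₁ x₂ : X)
    (h1 : f p = p) (h2 : f x₁ = p) (h3 : f x₂ = x₁)
    (hx1p : x₁ ≠ p)
    (N2 : ∀ z, f z = p → z = p ∨ z = x₁)
    (N3 : ∀ z, f z = x₁ → z = x₂)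
    (N4 : ∀ q, f q = q → q ≠ p → ∃ v₁ v₂ u₁ u₂, f v₁ = q ∧ f v₂ = q ∧
        f u₁ = v₁ ∧ f u₂ = v₂ ∧ v₁ ≠ v₂ ∧ v₁ ≠ q ∧ v₂ ≠ q)
    (n : ℕ) (hn : 2 ≤ n) (g : X → X) (hg : g^[n] = f) : False := by
  have hgf : ∀ z, g (f z) = f (g z) := by
    intro z
    rw [← hg]
    calc g (g^[n] z) = g^[n+1] z := (Function.iterate_succ_apply' g n z).symm
    _ = g^[n] (g z) := Function.iterate_succ_apply g n z
  have hn1 : n - 1 + 1 = n := by omega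
  have hA1 : ∀ z, g^[n-1] (g z) = f z := by
    intro z
    rw [← Function.iterate_succ_apply g (n-1) z, Nat.succ_eq_add_one, hn1, hg]
  have hA2 : ∀ z, g (g^[n-1] z) = f z := by
    intro z
    rw [← Function.iterate_succ_apply' g (n-1) z, Nat.succ_eq_add_one, hn1, hg]
  have hAf : ∀ z, g^[n-1] (f z) = f (g^[n-1] z) := by
    intro z
    rw [← hg, ← Function.iterate_add_apply, ← Function.iterate_add_apply, Nat.add_comm]
  have hq : f (g p) = g p := by
    have := hgf p
    rw [h1] at this
    exact this.symm
  by_cases hqp : g p = p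
  · -- case q = p
    have hy1 : f (g x₁) = p := by rw [← hgf x₁, h2, hqp]
    rcases N2 _ hy1 with hgx1 | hgx1
    · -- g x₁ = p
      have hy2 : f (g x₂) = p := by rw [← hgf x₂, h3, hgx1]
      rcases N2 _ hy2 with hgx2 | hgx2
      · -- g x₂ = p
        have hfx2 : f x₂ = p := by
          rw [← hg, ← hn1, Function.iterate_succ_apply, hgx2, Function.iterate_fixed hqp]
        exact hx1p (by rw [← h3, hfx2])
      · -- g x₂ = x₁
        have hn2 : n - 2 + 1 + 1 = n := by omega
        have hfx2 : f x₂ = p := by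
          rw [← hg, ← hn2, Function.iterate_succ_apply, hgx2,
            Function.iterate_succ_apply, hgx1, Function.iterate_fixed hqp]
        exact hx1p (by rw [← h3, hfx2])
    · -- g x₁ = x₁
      have : f x₁ = x₁ := by rw [← hg, Function.iterate_fixed hgx1]
      exact hx1p (by rw [← h2, this])
  · -- case q ≠ p
    obtain ⟨v₁, v₂, u₁, u₂, hv₁, hv₂, hu₁, hu₂, hvne, hv₁q, hv₂q⟩ := N4 (g p) hq hqp
    have hAq : g^[n-1] (g p) = p := by rw [hA1, h1]
    have key : ∀ v u, f v = g p → f u = v → v ≠ g p → v = g x₁ ∨ v = g x₂ := by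
      intro v u hv hu hvq
      have h5 : f (g^[n-1] v) = p := by rw [← hAf, hv, hAq]
      have h8 : v = g (g^[n-1] u) := by rw [hA2, hu]
      rcases N2 _ h5 with h6 | h6
      · have h7 : f (g^[n-1] u) = p := by rw [← hAf, hu, h6]
        rcases N2 _ h7 with h9 | h9
        · rw [h9] at h8
          exact absurd h8 hvq
        · rw [h9] at h8
          exact Or.inl h8
      · have h7 : f (g^[n-1] u) = x₁ := by rw [← hAf, hu, h6]
        have h9 := N3 _ h7
        rw [h9] at h8
        exact Or.inr h8
    have hchain : f (g x₂) = g x₁ := by rw [← hgf, h3]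
    rcases key v₁ u₁ hv₁ hu₁ hv₁q with k1 | k1 <;>
      rcases key v₂ u₂ hv₂ hu₂ hv₂q with k2 | k2
    · exact hvne (k1.trans k2.symm)
    · -- v₁ = g x₁, v₂ = g x₂ : f (g x₂) = g p gives g x₁ = g p, so v₁ = g p
      apply hv₁q
      rw [k1, ← hchain, ← k2, hv₂]
    · apply hv₂q
      rw [k2, ← hchain, ← k1, hv₁]
    · exact hvne (k1.trans k2.symm)


/-! ### the 1-dimensional backbone function G -/

noncomputable def G (M s : ℝ) : ℝ :=
  if 50*M ≤ s then
    (if 55*M ≤ s then (if 60*M ≤ s then s - 10*M else 58*M - (8/5)*(s - 55*M))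
     else 50*M + (8/5)*(s - 50*M))
  else 25 * max 0 (s - 48*M)

variable {M : ℝ}

lemma G_cont (hM : 0 < M) : Continuous (G M) := by
  unfold G
  refine Continuous.if_le ?_ ?_ continuous_const continuous_id ?_
  · refine Continuous.if_le ?_ ?_ continuous_const continuous_id ?_
    · refine Continuous.if_le (by fun_prop) (by fun_prop) continuous_const continuous_id ?_
      intro s hs
      rw [← hs]
      ring
    · fun_prop
    · intro s hs
      rw [← hs, if_neg (by linarith)]
      ring
  · exact continuous_const.mul (continuous_const.max (continuous_id.sub continuous_const))
  · intro s hs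
    rw [← hs, if_neg (by linarith), max_eq_right (by linarith)]
    ring

lemma G_zero (hM : 0 < M) {s : ℝ} (hs : s ≤ 48*M) : G M s = 0 := by
  unfold G
  rw [if_neg (by linarith), max_eq_left (by linarith)]
  ring

lemma G_solve50 (hM : 0 < M) {s : ℝ} (h : G M s = 50*M) : s = 50*M ∨ s = 60*M := by
  unfold G at h
  split_ifs at h with h1 h2 h3
  · right; linarith
  · right; linarith
  · left; linarith
  · rcases le_total (s - 48*M) 0 with hc | hc
    · rw [max_eq_left hc] at h; exfalso; linarith
    · rw [max_eq_right hc] at h; exfalso; linarith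

lemma G_solve60 (hM : 0 < M) {s : ℝ} (h : G M s = 60*M) : s = 70*M := by
  unfold G at h
  split_ifs at h with h1 h2 h3
  · linarith
  · exfalso; linarith
  · exfalso; linarith
  · rcases le_total (s - 48*M) 0 with hc | hc
    · rw [max_eq_left hc] at h; exfalso; linarith
    · rw [max_eq_right hc] at h; exfalso; linarith

lemma G_fix (hM : 0 < M) {s : ℝ} (hs : 47*M ≤ s) (h : G M s = s) :
    s = 50*M ∨ s = 730*M/13 := by
  unfold G at h
  split_ifs at h with h1 h2 h3
  · exfalso; linarith
  · right; linarith
  · left; linarith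
  · rcases le_total (s - 48*M) 0 with hc | hc
    · rw [max_eq_left hc] at h; exfalso; linarith
    · rw [max_eq_right hc] at h; exfalso; linarith

lemma G_at50 (hM : 0 < M) : G M (50*M) = 50*M := by
  unfold G
  rw [if_pos le_rfl, if_neg (by linarith)]
  ring

lemma G_at60 (hM : 0 < M) : G M (60*M) = 50*M := by
  unfold G
  rw [if_pos (by linarith), if_pos (by linarith), if_pos le_rfl]
  ring

lemma G_at70 (hM : 0 < M) : G M (70*M) = 60*M := by
  unfold G
  rw [if_pos (by linarith), if_pos (by linarith), if_pos (by linarith)]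
  ring

lemma G_atv1 (hM : 0 < M) : G M (700*M/13) = 730*M/13 := by
  unfold G
  rw [if_pos (by linarith), if_neg (by linarith)]
  ring

lemma G_atu1 (hM : 0 < M) : G M (2725*M/52) = 700*M/13 := by
  unfold G
  rw [if_pos (by linarith), if_neg (by linarith)]
  ring

lemma G_atv2 (hM : 0 < M) : G M (860*M/13) = 730*M/13 := by
  unfold G
  rw [if_pos (by linarith), if_pos (by linarith), if_pos (by linarith)]
  ring

lemma G_atu2 (hM : 0 < M) : G M (990*M/13) = 860*M/13 := by
  unfold G
  rw [if_pos (by linarith), if_pos (by linarith), if_pos (by linarith)]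
  ring


/-! ### pieces in `Fin m → ℝ` -/

section Pieces

variable {m : ℕ} [NeZero m]

noncomputable def E : Fin m → ℝ := Pi.single 0 1

lemma E_norm : ‖(E : Fin m → ℝ)‖ = 1 := by
  rw [E, Pi.norm_single, norm_one]

lemma normsE (c : ℝ) : ‖c • (E : Fin m → ℝ)‖ = |c| := by
  rw [norm_smul, E_norm, Real.norm_eq_abs, mul_one]

lemma E_zero : (E : Fin m → ℝ) 0 = 1 := Pi.single_eq_same 0 1

lemma E_ne {i : Fin m} (hi : i ≠ 0) : (E : Fin m → ℝ) i = 0 := Pi.single_eq_of_ne hi 1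

lemma sE_zero (c : ℝ) : (c • (E : Fin m → ℝ)) 0 = c := by
  rw [Pi.smul_apply, E_zero, smul_eq_mul, mul_one]

lemma sE_ne (c : ℝ) {i : Fin m} (hi : i ≠ 0) : (c • (E : Fin m → ℝ)) i = 0 := by
  rw [Pi.smul_apply, E_ne hi, smul_eq_mul, mul_zero]

lemma coord_le_norm (x : Fin m → ℝ) (i : Fin m) : |x i| ≤ ‖x‖ := by
  rw [← Real.norm_eq_abs]; exact norm_le_pi_norm x i

noncomputable def lat (x : Fin m → ℝ) : Fin m → ℝ := fun i => if i = 0 then 0 else x i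

lemma lat_cont : Continuous (lat (m := m)) := by
  refine continuous_pi fun i => ?_
  unfold lat
  by_cases h : i = 0
  · simp only [if_pos h]; exact continuous_const
  · simp only [if_neg h]; exact continuous_apply i

lemma lat_zero (x : Fin m → ℝ) : lat x 0 = 0 := if_pos rfl

lemma lat_ne (x : Fin m → ℝ) {i : Fin m} (hi : i ≠ 0) : lat x i = x i := if_neg hi

lemma lat_sE (c : ℝ) : lat (c • (E : Fin m → ℝ)) = 0 := by
  funext i
  by_cases h : i = 0
  · rw [h, lat_zero]; rfl
  · rw [lat_ne _ h, sE_ne c h]; rfl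

variable {M ρ C : ℝ} {h : (Fin m → ℝ) → (Fin m → ℝ)}

/-- ball piece translating `B(c•E, M)` onto `B(t•E, M)`, supported in `B(c•E, 2M)`. -/
noncomputable def bp (M c t : ℝ) (x : Fin m → ℝ) : Fin m → ℝ :=
  cl (2 - ‖x - c • E‖ / M) • (t • E + (x - c • E))

lemma bp_cont {c t : ℝ} (hM : 0 < M) : Continuous (bp (m := m) M c t) := by
  refine Continuous.smul (f := fun x : Fin m → ℝ => cl (2 - ‖x - c • E‖ / M))
    (g := fun x : Fin m → ℝ => t • E + (x - c • E)) ?_ ?_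
  · exact continuous_cl.comp
      (continuous_const.sub (((continuous_id.sub continuous_const).norm).div_const M))
  · exact continuous_const.add (continuous_id.sub continuous_const)

lemma bp_zero {c t : ℝ} (hM : 0 < M) {x : Fin m → ℝ} (hx : 2*M ≤ ‖x - c • E‖) :
    bp M c t x = 0 := by
  unfold bp
  rw [cl_of_nonpos, zero_smul]
  rw [sub_nonpos, le_div_iff₀ hM]
  linarith

lemma bp_eval {c t : ℝ} (hM : 0 < M) {q : Fin m → ℝ} (hq : ‖q‖ ≤ M) :
    bp M c t (q + c • E) = t • E + q := by
  unfold bp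
  rw [add_sub_cancel_right, cl_of_one_le, one_smul]
  rw [le_sub_iff_add_le]
  have : ‖q‖ / M ≤ 1 := by
    rw [div_le_one hM]; exact hq
  linarith

lemma bp_norm {c t : ℝ} (hM : 0 < M) (ht : 0 ≤ t) (x : Fin m → ℝ) :
    ‖bp M c t x‖ ≤ t + 2*M := by
  by_cases hx : 2*M ≤ ‖x - c • E‖
  · rw [bp_zero hM hx, norm_zero]
    linarith
  · push_neg at hx
    unfold bp
    rw [norm_smul, Real.norm_eq_abs, abs_of_nonneg (cl_nonneg _)]
    calc cl (2 - ‖x - c • E‖ / M) * ‖t • E + (x - c • E)‖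
        ≤ 1 * ‖t • E + (x - c • E)‖ := by
          apply mul_le_mul_of_nonneg_right (cl_le_one _) (norm_nonneg _)
      _ = ‖t • E + (x - c • E)‖ := one_mul _
      _ ≤ ‖t • (E : Fin m → ℝ)‖ + ‖x - c • E‖ := norm_add_le _ _
      _ ≤ t + 2*M := by
          rw [normsE, abs_of_nonneg ht]
          linarith

/-- the core piece: a cut-off version of `h`. -/
noncomputable def corep (h : (Fin m → ℝ) → (Fin m → ℝ)) (ρ : ℝ) (x : Fin m → ℝ) : Fin m → ℝ :=
  cl (ρ + 1 - ‖x‖) • h ((ρ / max ρ ‖x‖) • x)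

lemma corep_cont (hh : Continuous h) (hρ : 0 < ρ) : Continuous (corep h ρ) := by
  refine Continuous.smul (continuous_cl.comp (continuous_const.sub continuous_norm)) ?_
  refine hh.comp (Continuous.smul (f := fun x : Fin m → ℝ => ρ / max ρ ‖x‖) ?_ continuous_id)
  exact continuous_const.div (continuous_const.max continuous_norm)
    fun x => (lt_of_lt_of_le hρ (le_max_left _ _)).ne'

lemma corep_eq (hρ : 0 < ρ) {x : Fin m → ℝ} (hx : ‖x‖ ≤ ρ) : corep h ρ x = h x := by
  unfold corep
  rw [cl_of_one_le (by linarith), one_smul, max_eq_left hx, div_self hρ.ne', one_smul]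

lemma corep_zero {x : Fin m → ℝ} (hx : ρ + 1 ≤ ‖x‖) : corep h ρ x = 0 := by
  unfold corep
  rw [cl_of_nonpos (by linarith), zero_smul]

lemma corep_norm (hρ : 0 < ρ) (hC : ∀ y : Fin m → ℝ, ‖y‖ ≤ ρ → ‖h y‖ ≤ C)
    (x : Fin m → ℝ) : ‖corep h ρ x‖ ≤ C := by
  unfold corep
  have hv : 0 < max ρ ‖x‖ := lt_of_lt_of_le hρ (le_max_left _ _)
  have harg : ‖(ρ / max ρ ‖x‖) • x‖ ≤ ρ := by
    rw [norm_smul, Real.norm_eq_abs, abs_of_nonneg (by positivity)]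
    calc ρ / max ρ ‖x‖ * ‖x‖ ≤ ρ / max ρ ‖x‖ * max ρ ‖x‖ := by
          apply mul_le_mul_of_nonneg_left (le_max_right _ _) (by positivity)
      _ = ρ := div_mul_cancel₀ ρ hv.ne'
  have := hC _ harg
  rw [norm_smul, Real.norm_eq_abs, abs_of_nonneg (cl_nonneg _)]
  calc cl (ρ + 1 - ‖x‖) * ‖h ((ρ / max ρ ‖x‖) • x)‖
      ≤ 1 * ‖h ((ρ / max ρ ‖x‖) • x)‖ :=
        mul_le_mul_of_nonneg_right (cl_le_one _) (norm_nonneg _)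
    _ = ‖h ((ρ / max ρ ‖x‖) • x)‖ := one_mul _
    _ ≤ C := this

/-- the tube piece along the first axis. -/
noncomputable def tubep (M : ℝ) (x : Fin m → ℝ) : Fin m → ℝ :=
  G M (x 0) • E + (cl ((x 0 - 48*M)/M) / 2) • lat x

lemma tubep_cont (hM : 0 < M) : Continuous (tubep (m := m) M) := by
  refine Continuous.add (Continuous.smul ((G_cont hM).comp (continuous_apply 0)) continuous_const) ?_
  refine Continuous.smul (f := fun x : Fin m → ℝ => cl ((x 0 - 48*M)/M) / 2) ?_ (lat_cont (m := m))
  exact (continuous_cl.comp (by fun_prop : Continuous fun x : Fin m → ℝ => (x 0 - 48*M)/M)).div_const 2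

lemma tubep_zero (hM : 0 < M) {x : Fin m → ℝ} (hx : x 0 ≤ 48*M) : tubep M x = 0 := by
  unfold tubep
  rw [G_zero hM hx, zero_smul, cl_of_nonpos (div_nonpos_of_nonpos_of_nonneg (by linarith) hM.le),
    zero_div, zero_smul, add_zero]

lemma tubep_apply0 (x : Fin m → ℝ) : tubep M x 0 = G M (x 0) := by
  unfold tubep
  rw [Pi.add_apply, sE_zero, Pi.smul_apply, lat_zero, smul_eq_mul, mul_zero, add_zero]

lemma tubep_applyne (x : Fin m → ℝ) {i : Fin m} (hi : i ≠ 0) :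
    tubep M x i = (cl ((x 0 - 48*M)/M) / 2) * x i := by
  unfold tubep
  rw [Pi.add_apply, sE_ne _ hi, Pi.smul_apply, lat_ne _ hi, smul_eq_mul, zero_add]

lemma tubep_axis (c : ℝ) : tubep M (c • (E : Fin m → ℝ)) = G M c • E := by
  unfold tubep
  rw [sE_zero, lat_sE, smul_zero, add_zero]

end Pieces


/-! ### The full map `F` -/

section Main

set_option linter.unusedSectionVars false

variable {m : ℕ} [NeZero m] {h : (Fin m → ℝ) → (Fin m → ℝ)} {ρ C M : ℝ}

noncomputable def F (h : (Fin m → ℝ) → (Fin m → ℝ)) (ρ M : ℝ) (x : Fin m → ℝ) : Fin m → ℝ :=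
  corep h ρ x + bp M (10*M) 0 x + bp M (20*M) 0 x + bp M (30*M) (10*M) x
    + bp M (40*M) (20*M) x + tubep M x

lemma F_cont (hh : Continuous h) (hρ : 0 < ρ) (hM : 0 < M) :
    Continuous (F h ρ M (m := m)) :=
  (((((corep_cont hh hρ).add (bp_cont hM)).add (bp_cont hM)).add (bp_cont hM)).add
    (bp_cont hM)).add (tubep_cont hM)

lemma dist0 (x : Fin m → ℝ) (c : ℝ) : |x 0 - c| ≤ ‖x - c • E‖ := by
  have h1 := coord_le_norm (x - c • E) 0
  rwa [Pi.sub_apply, sE_zero] at h1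

lemma bp_zero0 (hM : 0 < M) {c t : ℝ} {x : Fin m → ℝ} (hx : 2*M ≤ |x 0 - c|) :
    bp M c t x = 0 :=
  bp_zero hM (hx.trans (dist0 x c))

lemma corep_zero0 {x : Fin m → ℝ} (hx : ρ + 1 ≤ |x 0|) : corep h ρ x = 0 :=
  corep_zero (hx.trans (coord_le_norm x 0))

lemma F_tube_case (hρ : 0 < ρ) (hM : 0 < M) (hρM : ρ + 2 ≤ M) {z : Fin m → ℝ}
    (hz : 48*M ≤ z 0) : F h ρ M z = tubep M z := by
  unfold F
  rw [corep_zero0 (le_trans (by linarith : ρ + 1 ≤ z 0) (le_abs_self _)),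
      bp_zero0 hM (le_trans (by linarith : 2*M ≤ z 0 - 10*M) (le_abs_self _)),
      bp_zero0 hM (le_trans (by linarith : 2*M ≤ z 0 - 20*M) (le_abs_self _)),
      bp_zero0 hM (le_trans (by linarith : 2*M ≤ z 0 - 30*M) (le_abs_self _)),
      bp_zero0 hM (le_trans (by linarith : 2*M ≤ z 0 - 40*M) (le_abs_self _))]
  simp

lemma F_axis (hρ : 0 < ρ) (hM : 0 < M) (hρM : ρ + 2 ≤ M) {c : ℝ} (hc : 48*M ≤ c) :
    F h ρ M (c • E) = G M c • E := by
  rw [F_tube_case hρ hM hρM (by rw [sE_zero]; exact hc), tubep_axis]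

lemma F_core (hρ : 0 < ρ) (hM : 0 < M) (hρM : ρ + 2 ≤ M) {x : Fin m → ℝ}
    (hx : ‖x‖ ≤ ρ) : F h ρ M x = h x := by
  have h0 : |x 0| ≤ ρ := (coord_le_norm x 0).trans hx
  rw [abs_le] at h0
  unfold F
  rw [corep_eq hρ hx,
      bp_zero0 hM (show 2*M ≤ |x 0 - 10*M| by
              rw [abs_sub_comm]; exact le_trans (by linarith) (le_abs_self _)),
      bp_zero0 hM (show 2*M ≤ |x 0 - 20*M| by
              rw [abs_sub_comm]; exact le_trans (by linarith) (le_abs_self _)),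
      bp_zero0 hM (show 2*M ≤ |x 0 - 30*M| by
              rw [abs_sub_comm]; exact le_trans (by linarith) (le_abs_self _)),
      bp_zero0 hM (show 2*M ≤ |x 0 - 40*M| by
              rw [abs_sub_comm]; exact le_trans (by linarith) (le_abs_self _)),
      tubep_zero hM (by linarith)]
  simp

lemma F_notube (hρ : 0 < ρ) (hM : 0 < M) (hCM : C ≤ M)
    (hC : ∀ y : Fin m → ℝ, ‖y‖ ≤ ρ → ‖h y‖ ≤ C) {z : Fin m → ℝ}
    (hz : z 0 ≤ 48*M) : ‖F h ρ M z‖ ≤ 39*M := by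
  unfold F
  rw [tubep_zero hM hz, add_zero]
  have b0 := corep_norm (C := C) hρ hC z
  have b1 := bp_norm (c := 10*M) (t := 0) hM le_rfl z
  have b2 := bp_norm (c := 20*M) (t := 0) hM le_rfl z
  have b3 := bp_norm (c := 30*M) (t := 10*M) hM (by linarith) z
  have b4 := bp_norm (c := 40*M) (t := 20*M) hM (by linarith) z
  calc ‖corep h ρ z + bp M (10*M) 0 z + bp M (20*M) 0 z + bp M (30*M) (10*M) z
      + bp M (40*M) (20*M) z‖
      ≤ ‖corep h ρ z + bp M (10*M) 0 z + bp M (20*M) 0 z + bp M (30*M) (10*M) z‖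
        + ‖bp M (40*M) (20*M) z‖ := norm_add_le _ _
    _ ≤ (‖corep h ρ z + bp M (10*M) 0 z + bp M (20*M) 0 z‖ + ‖bp M (30*M) (10*M) z‖)
        + ‖bp M (40*M) (20*M) z‖ := by
          gcongr
          exact norm_add_le _ _
    _ ≤ ((‖corep h ρ z + bp M (10*M) 0 z‖ + ‖bp M (20*M) 0 z‖) + ‖bp M (30*M) (10*M) z‖)
        + ‖bp M (40*M) (20*M) z‖ := by
          gcongr
          exact norm_add_le _ _
    _ ≤ (((‖corep h ρ z‖ + ‖bp M (10*M) 0 z‖) + ‖bp M (20*M) 0 z‖) + ‖bp M (30*M) (10*M) z‖)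
        + ‖bp M (40*M) (20*M) z‖ := by
          gcongr
          exact norm_add_le _ _
    _ ≤ 39*M := by linarith

lemma abs3 {M a : ℝ} (h : 3*M ≤ a) : 3*M ≤ |a| := h.trans (le_abs_self a)

lemma abs3' {M a : ℝ} (h : 3*M ≤ -a) : 3*M ≤ |a| := h.trans (neg_le_abs a)

/-- evaluation at points `q + c•E`, `‖q‖ ≤ M`, for the four ball centers -/
lemma F_ball_eval (hρ : 0 < ρ) (hM : 0 < M) (hρM : ρ + 2 ≤ M) {q : Fin m → ℝ}
    (hq : ‖q‖ ≤ M) {c t : ℝ}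
    (hc : (c = 10*M ∧ t = 0) ∨ (c = 20*M ∧ t = 0) ∨ (c = 30*M ∧ t = 10*M)
      ∨ (c = 40*M ∧ t = 20*M)) :
    F h ρ M (q + c • E) = t • E + q := by
  have h0 : |q 0| ≤ M := (coord_le_norm q 0).trans hq
  rw [abs_le] at h0
  have hc10 : 10*M ≤ c := by rcases hc with ⟨rfl,rfl⟩|⟨rfl,rfl⟩|⟨rfl,rfl⟩|⟨rfl,rfl⟩ <;> linarith
  have hc40 : c ≤ 40*M := by rcases hc with ⟨rfl,rfl⟩|⟨rfl,rfl⟩|⟨rfl,rfl⟩|⟨rfl,rfl⟩ <;> linarith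
  have hx0 : (q + c • (E : Fin m → ℝ)) 0 = q 0 + c := by rw [Pi.add_apply, sE_zero]
  have key : ∀ c' t', 3*M ≤ |c - c'| → bp M c' t' (q + c • E) = 0 := by
    intro c' t' hcc
    apply bp_zero0 hM
    rw [hx0]
    rcases le_or_gt c' c with hle | hlt
    · have h1 : 3*M ≤ c - c' := by rwa [abs_of_nonneg (by linarith)] at hcc
      calc 2*M ≤ q 0 + c - c' := by linarith
        _ ≤ |q 0 + c - c'| := le_abs_self _
    · have h1 : 3*M ≤ c' - c := by
        rw [abs_of_neg (by linarith), neg_sub] at hcc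
        exact hcc
      calc 2*M ≤ -(q 0 + c - c') := by linarith
        _ ≤ |q 0 + c - c'| := neg_le_abs _
  have hcore : corep h ρ (q + c • E) = 0 := by
    apply corep_zero0
    rw [hx0]
    calc ρ + 1 ≤ q 0 + c := by linarith
      _ ≤ |q 0 + c| := le_abs_self _
  have htube : tubep M (q + c • E) = 0 := tubep_zero hM (by rw [hx0]; linarith)
  rcases hc with ⟨rfl,rfl⟩|⟨rfl,rfl⟩|⟨rfl,rfl⟩|⟨rfl,rfl⟩
  · unfold F
    rw [hcore, bp_eval hM hq, key (20*M) 0 (abs3' (by linarith)),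
      key (30*M) (10*M) (abs3' (by linarith)), key (40*M) (20*M) (abs3' (by linarith)), htube]
    simp
  · unfold F
    rw [hcore, bp_eval hM hq, key (10*M) 0 (abs3 (by linarith)),
      key (30*M) (10*M) (abs3' (by linarith)), key (40*M) (20*M) (abs3' (by linarith)), htube]
    simp
  · unfold F
    rw [hcore, bp_eval hM hq, key (10*M) 0 (abs3 (by linarith)),
      key (20*M) 0 (abs3 (by linarith)), key (40*M) (20*M) (abs3' (by linarith)), htube]
    simp
  · unfold F
    rw [hcore, bp_eval hM hq, key (10*M) 0 (abs3 (by linarith)),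
      key (20*M) 0 (abs3 (by linarith)), key (30*M) (10*M) (abs3 (by linarith)), htube]
    simp


theorem exists_gadget (m : ℕ) [NeZero m] (h : (Fin m → ℝ) → (Fin m → ℝ)) (hh : Continuous h)
    (ρ : ℝ) (hρ : 0 < ρ) :
    ∃ f : (Fin m → ℝ) → (Fin m → ℝ), Continuous f ∧ (∀ x, ‖x‖ ≤ ρ → f x = h x) ∧
      ∀ n : ℕ, 2 ≤ n → ∀ g : (Fin m → ℝ) → (Fin m → ℝ), g^[n] ≠ f := by
  classical
  obtain ⟨C, hC⟩ := (isCompact_closedBall (0 : Fin m → ℝ) ρ).exists_bound_of_continuousOn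
    hh.continuousOn
  set C₀ := max C 0 with hC₀def
  have hC0 : ∀ y : Fin m → ℝ, ‖y‖ ≤ ρ → ‖h y‖ ≤ C₀ := fun y hy =>
    (hC y (by simpa [Metric.mem_closedBall, dist_zero_right] using hy)).trans (le_max_left _ _)
  have hC0nn : (0:ℝ) ≤ C₀ := le_max_right _ _
  set M := ρ + C₀ + 2 with hMdef
  have hM : 0 < M := by linarith
  have hρM : ρ + 2 ≤ M := by linarith
  have hCM : C₀ ≤ M := by linarith
  refine ⟨F h ρ M, F_cont hh hρ hM, fun x hx => F_core hρ hM hρM hx, ?_⟩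
  intro n hn g hg
  -- the gadget points
  set p : Fin m → ℝ := (50*M) • E with hp
  set x₁ : Fin m → ℝ := (60*M) • E with hx₁
  set x₂ : Fin m → ℝ := (70*M) • E with hx₂
  have hne : ∀ a b : ℝ, a < b → (a • E : Fin m → ℝ) ≠ b • E := by
    intro a b hab e
    have := congrFun e 0
    rw [sE_zero, sE_zero] at this
    exact hab.ne this
  have hfp : F h ρ M p = p := by
    rw [hp, F_axis hρ hM hρM (by linarith), G_at50 hM]
  have hfx₁ : F h ρ M x₁ = p := by
    rw [hx₁, hp, F_axis hρ hM hρM (by linarith), G_at60 hM]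
  have hfx₂ : F h ρ M x₂ = x₁ := by
    rw [hx₂, hx₁, F_axis hρ hM hρM (by linarith), G_at70 hM]
  have hx1p : x₁ ≠ p := by
    rw [hx₁, hp]
    exact fun e => hne (50*M) (60*M) (by linarith) e.symm
  -- N2
  have N2 : ∀ z, F h ρ M z = p → z = p ∨ z = x₁ := by
    intro z hz
    by_cases hz0 : 48*M ≤ z 0
    · rw [F_tube_case hρ hM hρM hz0] at hz
      have h0 : G M (z 0) = 50*M := by
        have := congrFun hz 0
        rwa [tubep_apply0, hp, sE_zero] at this
      have lateral : ∀ c', z 0 = c' → 50*M ≤ c' → z = c' • E := by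
        intro c' hc' hc50
        funext i
        by_cases hi : i = 0
        · subst hi; rw [sE_zero]; exact hc'
        · rw [sE_ne _ hi]
          have hzi := congrFun hz i
          rw [tubep_applyne _ hi, hp, sE_ne _ hi] at hzi
          have hcl : cl ((z 0 - 48*M)/M) = 1 := by
            apply cl_of_one_le
            rw [le_div_iff₀ hM]
            rw [hc']
            linarith
          rw [hcl] at hzi
          linarith
      rcases G_solve50 hM h0 with h50 | h60
      · exact Or.inl (by rw [hp]; exact lateral _ h50 le_rfl)
      · exact Or.inr (by rw [hx₁]; exact lateral _ h60 (by linarith))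
    · exfalso
      have hb := F_notube (h := h) hρ hM hCM hC0 (le_of_not_ge hz0)
      rw [hz, hp, normsE, abs_of_nonneg (by linarith)] at hb
      linarith
  -- N3
  have N3 : ∀ z, F h ρ M z = x₁ → z = x₂ := by
    intro z hz
    by_cases hz0 : 48*M ≤ z 0
    · rw [F_tube_case hρ hM hρM hz0] at hz
      have h0 : G M (z 0) = 60*M := by
        have := congrFun hz 0
        rwa [tubep_apply0, hx₁, sE_zero] at this
      have h70 := G_solve60 hM h0
      rw [hx₂]
      funext i
      by_cases hi : i = 0
      · subst hi; rw [sE_zero]; exact h70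
      · rw [sE_ne _ hi]
        have hzi := congrFun hz i
        rw [tubep_applyne _ hi, hx₁, sE_ne _ hi] at hzi
        have hcl : cl ((z 0 - 48*M)/M) = 1 := by
          apply cl_of_one_le
          rw [le_div_iff₀ hM, h70]
          linarith
        rw [hcl] at hzi
        linarith
    · exfalso
      have hb := F_notube (h := h) hρ hM hCM hC0 (le_of_not_ge hz0)
      rw [hz, hx₁, normsE, abs_of_nonneg (by linarith)] at hb
      linarith
  -- N4
  have N4 : ∀ q, F h ρ M q = q → q ≠ p → ∃ v₁ v₂ u₁ u₂, F h ρ M v₁ = q ∧ F h ρ M v₂ = q ∧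
      F h ρ M u₁ = v₁ ∧ F h ρ M u₂ = v₂ ∧ v₁ ≠ v₂ ∧ v₁ ≠ q ∧ v₂ ≠ q := by
    intro q hq hqp
    by_cases hq0 : 48*M ≤ q 0
    · -- tube region: q must be the special fixed point q*
      rw [F_tube_case hρ hM hρM hq0] at hq
      have hlat : ∀ i, i ≠ (0 : Fin m) → q i = 0 := by
        intro i hi
        have hqi := congrFun hq i
        rw [tubep_applyne _ hi] at hqi
        have h2 : (cl ((q 0 - 48*M)/M) - 2) * q i = 0 := by linear_combination 2*hqi
        rcases mul_eq_zero.mp h2 with h3 | h3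
        · exfalso
          have := cl_le_one ((q 0 - 48*M)/M)
          linarith
        · exact h3
      have h0 : G M (q 0) = q 0 := by
        have := congrFun hq 0
        rwa [tubep_apply0] at this
      have hax : q = (q 0) • (E : Fin m → ℝ) := by
        funext i
        by_cases hi : i = 0
        · subst hi; rw [sE_zero]
        · rw [sE_ne _ hi]; exact hlat i hi
      rcases G_fix hM (by linarith) h0 with h50 | hqs
      · exact absurd (by rw [hax, h50, hp]) hqp
      · refine ⟨(700*M/13) • E, (860*M/13) • E, (2725*M/52) • E, (990*M/13) • E,
          ?_, ?_, ?_, ?_, ?_, ?_, ?_⟩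
        · rw [F_axis hρ hM hρM (by linarith), G_atv1 hM, hax, hqs]
        · rw [F_axis hρ hM hρM (by linarith), G_atv2 hM, hax, hqs]
        · rw [F_axis hρ hM hρM (by linarith), G_atu1 hM]
        · rw [F_axis hρ hM hρM (by linarith), G_atu2 hM]
        · exact hne _ _ (by linarith)
        · rw [hax, hqs]; exact hne _ _ (by linarith)
        · rw [hax, hqs]; intro e; exact hne _ _ (by linarith : (730:ℝ)*M/13 < 860*M/13) e.symm
    · -- not in the tube region
      have hq0' : q 0 ≤ 48*M := le_of_not_ge hq0
      have htube : tubep M q = 0 := tubep_zero hM hq0'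
      -- rule out the ball regions
      by_cases b1 : ‖q - (10*M) • E‖ ≤ 3*M
      · exfalso
        have hq01 : |q 0 - 10*M| ≤ 3*M := (dist0 q _).trans b1
        rw [abs_le] at hq01
        have hFq : F h ρ M q = bp M (10*M) 0 q := by
          unfold F
          rw [corep_zero0 (le_trans (by linarith : ρ + 1 ≤ q 0) (le_abs_self _)),
            bp_zero0 hM (show 2*M ≤ |q 0 - 20*M| by
              rw [abs_sub_comm]; exact le_trans (by linarith) (le_abs_self _)),
            bp_zero0 hM (show 2*M ≤ |q 0 - 30*M| by
              rw [abs_sub_comm]; exact le_trans (by linarith) (le_abs_self _)),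
            bp_zero0 hM (show 2*M ≤ |q 0 - 40*M| by
              rw [abs_sub_comm]; exact le_trans (by linarith) (le_abs_self _)), htube]
          simp
        rw [hFq] at hq
        have hb := bp_norm (c := 10*M) (t := 0) hM le_rfl q
        rw [hq] at hb
        have h7 : (7:ℝ)*M ≤ ‖q‖ :=
          le_trans (le_trans (by linarith) (le_abs_self (q 0))) (coord_le_norm q 0)
        linarith
      by_cases b2 : ‖q - (20*M) • E‖ ≤ 3*M
      · exfalso
        have hq01 : |q 0 - 20*M| ≤ 3*M := (dist0 q _).trans b2
        rw [abs_le] at hq01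
        have hFq : F h ρ M q = bp M (20*M) 0 q := by
          unfold F
          rw [corep_zero0 (le_trans (by linarith : ρ + 1 ≤ q 0) (le_abs_self _)),
            bp_zero0 hM (le_trans (by linarith : 2*M ≤ q 0 - 10*M) (le_abs_self _)),
            bp_zero0 hM (show 2*M ≤ |q 0 - 30*M| by
              rw [abs_sub_comm]; exact le_trans (by linarith) (le_abs_self _)),
            bp_zero0 hM (show 2*M ≤ |q 0 - 40*M| by
              rw [abs_sub_comm]; exact le_trans (by linarith) (le_abs_self _)), htube]
          simp
        rw [hFq] at hq
        have hb := bp_norm (c := 20*M) (t := 0) hM le_rfl q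
        rw [hq] at hb
        have h7 : (17:ℝ)*M ≤ ‖q‖ :=
          le_trans (le_trans (by linarith) (le_abs_self (q 0))) (coord_le_norm q 0)
        linarith
      by_cases b3 : ‖q - (30*M) • E‖ ≤ 3*M
      · exfalso
        have hq01 : |q 0 - 30*M| ≤ 3*M := (dist0 q _).trans b3
        rw [abs_le] at hq01
        have hFq : F h ρ M q = bp M (30*M) (10*M) q := by
          unfold F
          rw [corep_zero0 (le_trans (by linarith : ρ + 1 ≤ q 0) (le_abs_self _)),
            bp_zero0 hM (le_trans (by linarith : 2*M ≤ q 0 - 10*M) (le_abs_self _)),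
            bp_zero0 hM (le_trans (by linarith : 2*M ≤ q 0 - 20*M) (le_abs_self _)),
            bp_zero0 hM (show 2*M ≤ |q 0 - 40*M| by
              rw [abs_sub_comm]; exact le_trans (by linarith) (le_abs_self _)), htube]
          simp
        rw [hFq] at hq
        have hb := bp_norm (c := 30*M) (t := 10*M) hM (by linarith) q
        rw [hq] at hb
        have h7 : (27:ℝ)*M ≤ ‖q‖ :=
          le_trans (le_trans (by linarith) (le_abs_self (q 0))) (coord_le_norm q 0)
        linarith
      by_cases b4 : ‖q - (40*M) • E‖ ≤ 3*M
      · exfalso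
        have hq01 : |q 0 - 40*M| ≤ 3*M := (dist0 q _).trans b4
        rw [abs_le] at hq01
        have hFq : F h ρ M q = bp M (40*M) (20*M) q := by
          unfold F
          rw [corep_zero0 (le_trans (by linarith : ρ + 1 ≤ q 0) (le_abs_self _)),
            bp_zero0 hM (le_trans (by linarith : 2*M ≤ q 0 - 10*M) (le_abs_self _)),
            bp_zero0 hM (le_trans (by linarith : 2*M ≤ q 0 - 20*M) (le_abs_self _)),
            bp_zero0 hM (le_trans (by linarith : 2*M ≤ q 0 - 30*M) (le_abs_self _)), htube]
          simp
        rw [hFq] at hq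
        have hb := bp_norm (c := 40*M) (t := 20*M) hM (by linarith) q
        rw [hq] at hb
        have h7 : (37:ℝ)*M ≤ ‖q‖ :=
          le_trans (le_trans (by linarith) (le_abs_self (q 0))) (coord_le_norm q 0)
        linarith
      -- core (or nowhere) region: the covering witnesses exist
      push_neg at b1 b2 b3 b4
      have hFq : F h ρ M q = corep h ρ q := by
        unfold F
        rw [bp_zero hM (by linarith : 2*M ≤ ‖q - (10*M) • E‖),
          bp_zero hM (by linarith : 2*M ≤ ‖q - (20*M) • E‖),
          bp_zero hM (by linarith : 2*M ≤ ‖q - (30*M) • E‖),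
          bp_zero hM (by linarith : 2*M ≤ ‖q - (40*M) • E‖), htube]
        simp
      rw [hFq] at hq
      have hqM : ‖q‖ ≤ M := by
        rw [← hq]
        exact (corep_norm hρ hC0 q).trans hCM
      refine ⟨q + (10*M) • E, q + (20*M) • E, q + (30*M) • E, q + (40*M) • E,
        ?_, ?_, ?_, ?_, ?_, ?_, ?_⟩
      · rw [F_ball_eval hρ hM hρM hqM (Or.inl ⟨rfl, rfl⟩), zero_smul, zero_add]
      · rw [F_ball_eval hρ hM hρM hqM (Or.inr (Or.inl ⟨rfl, rfl⟩)), zero_smul, zero_add]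
      · rw [F_ball_eval hρ hM hρM hqM (Or.inr (Or.inr (Or.inl ⟨rfl, rfl⟩))), add_comm]
      · rw [F_ball_eval hρ hM hρM hqM (Or.inr (Or.inr (Or.inr ⟨rfl, rfl⟩))), add_comm]
      · intro e
        have := congrFun e 0
        rw [Pi.add_apply, Pi.add_apply, sE_zero, sE_zero] at this
        linarith
      · intro e
        have := congrFun e 0
        rw [Pi.add_apply, sE_zero] at this
        linarith
      · intro e
        have := congrFun e 0
        rw [Pi.add_apply, sE_zero] at this
        linarith
  exact no_root (F h ρ M) p x₁ x₂ hfp hfx₁ hfx₂ hx1p N2 N3 N4 n hn g hg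

end Main


end IterRootsAux

open IterRootsAux in
/-- **Theorem 1(ii).** For `X = ℝ^m` with its usual topology, every non-empty
open subset of `C(X)` (with the compact-open topology) contains a continuous
self-map having no iterative root (even discontinuous) of any order `n ≥ 2`. -/
theorem euclidean_open_set_contains_map_without_roots (m : ℕ) (hm : 1 ≤ m)
    (U : Set C(Fin m → ℝ, Fin m → ℝ)) (hU : IsOpen U) (hUne : U.Nonempty) :
    ∃ f ∈ U, ∀ n : ℕ, 2 ≤ n →
      ¬ ∃ g : (Fin m → ℝ) → (Fin m → ℝ), g^[n] = ⇑f := by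
  classical
  haveI : NeZero m := ⟨by omega⟩
  obtain ⟨h, hhU⟩ := hUne
  -- extract a basic compact-open neighbourhood of h inside U
  have hbasis := TopologicalSpace.isTopologicalBasis_of_subbasis
    (ContinuousMap.compactOpen_eq (X := Fin m → ℝ) (Y := Fin m → ℝ))
  obtain ⟨b, hbmem, hhb, hbU⟩ := hbasis.exists_subset_of_mem_open hhU hU
  obtain ⟨T, ⟨hTfin, hTsub⟩, rfl⟩ := hbmem
  -- choose the compact sets
  have hmem : ∀ t : Set C(Fin m → ℝ, Fin m → ℝ), ∃ K : Set (Fin m → ℝ), IsCompact K ∧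
      ∃ V : Set (Fin m → ℝ), (t ∈ T → {f : C(Fin m → ℝ, Fin m → ℝ) | Set.MapsTo ⇑f K V} = t) := by
    intro t
    by_cases ht : t ∈ T
    · obtain ⟨K, hK, V, hV, hfe⟩ := hTsub ht
      exact ⟨K, hK, V, fun _ => hfe⟩
    · exact ⟨∅, isCompact_empty, ∅, fun hc => absurd hc ht⟩
  choose Kf hKf Vf hft using hmem
  have hKcpt : IsCompact (⋃ t ∈ T, Kf t) := hTfin.isCompact_biUnion fun t _ => hKf t
  obtain ⟨r, hr⟩ := hKcpt.isBounded.subset_closedBall (0 : Fin m → ℝ)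
  set ρ : ℝ := max r 1 with hρdef
  have hρ : 0 < ρ := lt_of_lt_of_le one_pos (le_max_right _ _)
  have hKρ : ∀ x ∈ ⋃ t ∈ T, Kf t, ‖x‖ ≤ ρ := by
    intro x hx
    have := hr hx
    rw [Metric.mem_closedBall, dist_zero_right] at this
    exact this.trans (le_max_left _ _)
  obtain ⟨f, hfc, hfeq, hfroots⟩ := exists_gadget m h h.continuous ρ hρ
  refine ⟨⟨f, hfc⟩, ?_, ?_⟩
  · apply hbU
    intro t ht
    rw [← hft t ht]
    intro x hx
    have hxρ : ‖x‖ ≤ ρ := hKρ x (Set.mem_biUnion ht hx)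
    show f x ∈ Vf t
    rw [hfeq x hxρ]
    have hht : h ∈ {f : C(Fin m → ℝ, Fin m → ℝ) | Set.MapsTo ⇑f (Kf t) (Vf t)} := by
      rw [hft t ht]
      exact hhb t ht
    exact hht hx
  · intro n hn hex
    obtain ⟨g, hg⟩ := hex
    exact hfroots n hn g hg
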